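/- The boundary value problem −r(x)y′(x)+q(x)y(x)=f(x), lim_{|x|→∞} y(x)=0, is correctly solvable in C(ℝ) if and only if ∫_x^∞ (1/r(t)) exp(−∫_x^t q(ξ)/r(ξ) dξ) dt → 0 as |x| → ∞. Moreover, if the problem is correctly solvable in C(ℝ), then S₁ = ∞; and in the correctly solvable case ‖G‖_{C(ℝ)→C(ℝ)} = sup_{x∈ℝ} ∫_x^∞ (1/r(t)) exp(−∫_x^t q(ξ)/r(ξ) dξ) dt. -/

import Mathlib

open MeasureTheory Filter Set Real
open scoped ENNReal NNReal

noncomputable section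

/-- `y` is a solution of the boundary value problem `-r·y' + q·y = f` on `ℝ` with
`y → 0` at `±∞`: `y` is continuous, locally absolutely continuous (encoded through the
integral identity, i.e. `y` is the integral of its a.e. derivative `(q·y - f)/r`),
and tends to `0` at both infinities. -/
def IsSolution (r q f y : ℝ → ℝ) : Prop :=
  Continuous y ∧
  (∀ a b : ℝ, y b - y a = ∫ t in a..b, (q t * y t - f t) / r t) ∧
  Tendsto y atBot (nhds 0) ∧ Tendsto y atTop (nhds 0)

/-- Correct solvability of the problem `-r·y' + q·y = f`, `y(±∞) = 0`, in `C(ℝ)`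
(bounded continuous functions with the sup-norm): for every bounded continuous `f`
there is a unique solution `y` (such a solution is automatically bounded and
continuous), and `sup|y| ≤ c·sup|f|` with a constant `c ∈ (0,∞)` independent of `f`. -/
def CorrectlySolvableC (r q : ℝ → ℝ) : Prop :=
  ∃ c : ℝ, 0 < c ∧
    ∀ f : ℝ → ℝ, Continuous f → (∃ M : ℝ, ∀ x, |f x| ≤ M) →
      (∃! y : ℝ → ℝ, IsSolution r q f y) ∧
      ∀ y : ℝ → ℝ, IsSolution r q f y → ∀ x, |y x| ≤ c * ⨆ t, |f t|

/-- `S₁ = ∫_{-∞}^0 q(t)/r(t) dt`, as a (possibly infinite) lower Lebesgue integral. -/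
def S1E (r q : ℝ → ℝ) : ℝ≥0∞ :=
  ∫⁻ t in Set.Iio (0 : ℝ), ENNReal.ofReal (q t / r t)

/-- The operator `(Gf)(x) = ∫_x^∞ (1/r(t)) exp(-∫_x^t q(s)/r(s) ds) f(t) dt`. -/
def G (r q f : ℝ → ℝ) (x : ℝ) : ℝ :=
  ∫ t in Set.Ioi x, (1 / r t) * Real.exp (-(∫ s in x..t, q s / r s)) * f t

/-- `A(x) = ∫_x^∞ (1/r(t)) exp(-∫_x^t q(ξ)/r(ξ) dξ) dt`, with values in `ℝ≥0∞`. -/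
def AE (r q : ℝ → ℝ) (x : ℝ) : ℝ≥0∞ :=
  ∫⁻ t in Set.Ioi x, ENNReal.ofReal ((1 / r t) * Real.exp (-(∫ s in x..t, q s / r s)))

/-- The operator norm of `G : C(ℝ) → C(ℝ)` (equal to `⊤` if `G` is unbounded). -/
def GOpNormC (r q : ℝ → ℝ) : ℝ≥0∞ :=
  sInf {C : ℝ≥0∞ | ∀ f : ℝ → ℝ, Continuous f → (∃ M : ℝ, ∀ x, |f x| ≤ M) →
    ∀ x, ENNReal.ofReal |G r q f x| ≤ C * ENNReal.ofReal (⨆ t, |f t|)}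

lemma exp_lip {u v M : ℝ} (hu : |u| ≤ M) (hv : |v| ≤ M) :
    |Real.exp u - Real.exp v| ≤ Real.exp M * |u - v| := by
  wlog h : v ≤ u generalizing u v
  · rw [abs_sub_comm, abs_sub_comm u v]; exact this hv hu (le_of_not_ge h)
  have h1 : Real.exp v ≤ Real.exp u := Real.exp_le_exp.2 h
  rw [abs_of_nonneg (sub_nonneg.2 h1), abs_of_nonneg (sub_nonneg.2 h)]
  have h2 : Real.exp u - Real.exp v ≤ (u - v) * Real.exp u := by
    have h3 := Real.add_one_le_exp (-(u - v))
    have hpos : (0:ℝ) < Real.exp u := Real.exp_pos u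
    have hkey : Real.exp (-(u - v)) * Real.exp u = Real.exp v := by
      rw [← Real.exp_add]; ring_nf
    nlinarith [Real.exp_pos v]
  calc Real.exp u - Real.exp v ≤ (u - v) * Real.exp u := h2
    _ ≤ (u - v) * Real.exp M := by
        apply mul_le_mul_of_nonneg_left (Real.exp_le_exp.2 (le_of_abs_le hu)) (sub_nonneg.2 h)
    _ = Real.exp M * (u - v) := mul_comm _ _

lemma key_cont {g : ℝ → ℝ} (hgc : Continuous g) (c a b : ℝ) :
    ∫ x in a..b, g x * Real.exp (c * ∫ s in a..x, g s) * c
      = Real.exp (c * ∫ s in a..b, g s) - 1 := by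
  set F : ℝ → ℝ := fun x => ∫ s in a..x, g s with hF
  have hFc : Continuous F :=
    intervalIntegral.continuous_primitive (fun u v => hgc.intervalIntegrable u v) a
  have hFd : ∀ x, HasDerivAt F (g x) x := fun x =>
    intervalIntegral.integral_hasDerivAt_right (hgc.intervalIntegrable a x)
      (hgc.stronglyMeasurableAtFilter volume (nhds x)) hgc.continuousAt
  have hΦd : ∀ x, HasDerivAt (fun x => Real.exp (c * F x))
      (g x * Real.exp (c * F x) * c) x := by
    intro x
    have h1 := ((hFd x).const_mul c).exp
    convert h1 using 1; ring
  have hcont : Continuous fun x => g x * Real.exp (c * F x) * c := by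
    exact ((hgc.mul ((continuous_const.mul hFc).rexp)).mul continuous_const)
  rw [intervalIntegral.integral_eq_sub_of_hasDerivAt (fun x _ => hΦd x)
    (hcont.intervalIntegrable a b)]
  simp [F]

lemma gii_of_loc {g : ℝ → ℝ} (hg : LocallyIntegrable g volume) (u v : ℝ) :
    IntervalIntegrable g volume u v := by
  rw [intervalIntegrable_iff]
  exact (hg.integrableOn_isCompact isCompact_uIcc).mono_set uIoc_subset_uIcc

lemma eps_le_zero {D K : ℝ} (hK : 0 ≤ K) (h : ∀ ε : ℝ, 0 < ε → ε ≤ 1 → |D| ≤ K * ε) :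
    D = 0 := by
  by_contra hD
  have h0 : 0 < |D| := abs_pos.mpr hD
  have hε0 : 0 < min 1 (|D| / (2 * (K + 1))) := lt_min one_pos (by positivity)
  have h1 := h _ hε0 (min_le_left _ _)
  have h2 : K * min 1 (|D| / (2 * (K + 1))) ≤ (K + 1) * (|D| / (2 * (K + 1))) :=
    mul_le_mul (by linarith) (min_le_right _ _) hε0.le (by linarith)
  have h3 : (K + 1) * (|D| / (2 * (K + 1))) = |D| / 2 := by
    field_simp
  nlinarith

lemma key' {g F : ℝ → ℝ} (hg : LocallyIntegrable g volume) (hgnn : ∀ x, 0 ≤ g x)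
    (c : ℝ) {a b : ℝ} (hab : a ≤ b) (hF : ∀ x, F x = ∫ s in a..x, g s) :
    ∫ x in a..b, g x * Real.exp (c * F x) * c = Real.exp (c * F b) - 1 := by
  have gii : ∀ u v : ℝ, IntervalIntegrable g volume u v := gii_of_loc hg
  have hFc : Continuous F := by
    rw [funext hF]
    exact intervalIntegral.continuous_primitive gii a
  have hF0 : ∀ x ∈ Icc a b, 0 ≤ F x := by
    intro x hx
    rw [hF x]
    exact intervalIntegral.integral_nonneg hx.1 fun u _ => hgnn u
  have hFb : ∀ x ∈ Icc a b, F x ≤ F b := by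
    intro x hx
    have h1 : (∫ s in a..x, g s) + ∫ s in x..b, g s = ∫ s in a..b, g s :=
      intervalIntegral.integral_add_adjacent_intervals (gii a x) (gii x b)
    have h2 : 0 ≤ ∫ s in x..b, g s :=
      intervalIntegral.integral_nonneg hx.2 fun u _ => hgnn u
    rw [hF x, hF b]; linarith
  have hFbnn : 0 ≤ F b := hF0 b ⟨hab, le_rfl⟩
  set M : ℝ := |c| * (F b + 1) with hM
  have hMnn : 0 ≤ M := by positivity
  set K : ℝ := Real.exp M * (|c| + |c| ^ 2 * (F b + 1) + |c|) with hK
  have hKnn : 0 ≤ K := by positivity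
  rw [← sub_eq_zero]
  apply eps_le_zero hKnn
  intro ε hε hε1
  -- continuous approximation of g in L¹ of [a, b]
  have hg0int : Integrable ((Icc a b).indicator g) volume := by
    rw [integrable_indicator_iff measurableSet_Icc]
    exact hg.integrableOn_isCompact isCompact_Icc
  obtain ⟨g1, -, hg1near, hg1c, hg1int⟩ :=
    hg0int.exists_hasCompactSupport_integral_sub_le hε
  have g1ii : ∀ u v : ℝ, IntervalIntegrable g1 volume u v := fun u v =>
    hg1c.intervalIntegrable u v
  -- L¹ closeness on subintervals
  have hL1 : ∀ x ∈ Icc a b, ∫ s in a..x, |g s - g1 s| ≤ ε := by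
    intro x hx
    have h3 : ∫ s in a..x, |g s - g1 s| = ∫ s in Ioc a x, |g s - g1 s| :=
      intervalIntegral.integral_of_le hx.1
    have h4 : ∫ s in Ioc a x, |g s - g1 s|
        = ∫ s in Ioc a x, ‖(Icc a b).indicator g s - g1 s‖ := by
      apply setIntegral_congr_fun measurableSet_Ioc
      intro s hs
      have hmem : s ∈ Icc a b := ⟨le_of_lt hs.1, hs.2.trans hx.2⟩
      simp only [Set.indicator_of_mem hmem, Real.norm_eq_abs]
    have h5 : ∫ s in Ioc a x, ‖(Icc a b).indicator g s - g1 s‖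
        ≤ ∫ s, ‖(Icc a b).indicator g s - g1 s‖ :=
      setIntegral_le_integral (hg0int.sub hg1int).norm
        (ae_of_all _ fun s => norm_nonneg _)
    linarith
  have hclose : ∀ x ∈ Icc a b, |F x - ∫ s in a..x, g1 s| ≤ ε := by
    intro x hx
    have h1 : F x - (∫ s in a..x, g1 s) = ∫ s in a..x, (g s - g1 s) := by
      rw [hF x, intervalIntegral.integral_sub (gii a x) (g1ii a x)]
    rw [h1]
    exact le_trans (intervalIntegral.abs_integral_le_integral_abs hx.1) (hL1 x hx)
  -- exponent bounds
  have hcFbd : ∀ x ∈ Icc a b, |c * F x| ≤ M := by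
    intro x hx
    rw [abs_mul, hM]
    refine mul_le_mul_of_nonneg_left ?_ (abs_nonneg c)
    rw [abs_of_nonneg (hF0 x hx)]
    linarith [hFb x hx]
  have hcF1bd : ∀ x ∈ Icc a b, |c * ∫ s in a..x, g1 s| ≤ M := by
    intro x hx
    rw [abs_mul, hM]
    refine mul_le_mul_of_nonneg_left ?_ (abs_nonneg c)
    have h1 := hclose x hx
    have h2 : |(∫ s in a..x, g1 s)| ≤ |F x| + |F x - ∫ s in a..x, g1 s| := by
      have h2a := abs_sub_abs_le_abs_sub (∫ s in a..x, g1 s) (F x)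
      have h2b := abs_sub_comm (∫ s in a..x, g1 s) (F x)
      linarith [h2a, h2b.le, h2b.ge]
    rw [abs_of_nonneg (hF0 x hx)] at h2
    linarith [hFb x hx]
  -- the identity for the continuous approximation
  have hid1 : ∫ x in a..b, g1 x * Real.exp (c * ∫ s in a..x, g1 s) * c
      = Real.exp (c * ∫ s in a..b, g1 s) - 1 := key_cont hg1c c a b
  -- integrability of the integrands
  have hF1c : Continuous fun x : ℝ => ∫ s in a..x, g1 s :=
    intervalIntegral.continuous_primitive g1ii a
  have hPint : IntervalIntegrable (fun x => g x * Real.exp (c * F x) * c) volume a b := by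
    have h1 : IntervalIntegrable (fun x => g x * (Real.exp (c * F x) * c)) volume a b :=
      (gii a b).mul_continuousOn
        (((continuous_const.mul hFc).rexp.mul continuous_const).continuousOn)
    simpa [mul_assoc] using h1
  have hP1int : IntervalIntegrable
      (fun x => g1 x * Real.exp (c * ∫ s in a..x, g1 s) * c) volume a b :=
    ((hg1c.mul ((continuous_const.mul hF1c).rexp)).mul continuous_const).intervalIntegrable a b
  -- pointwise bound
  set ψ : ℝ → ℝ := fun x =>
    Real.exp M * |c| * |g x - g1 x| + Real.exp M * (|c| ^ 2 * ε) * |g1 x| with hψ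
  have hψint : IntervalIntegrable ψ volume a b :=
    (((gii a b).sub (g1ii a b)).abs.const_mul _).add ((g1ii a b).abs.const_mul _)
  have hpt : ∀ x ∈ Icc a b,
      |g x * Real.exp (c * F x) * c - g1 x * Real.exp (c * ∫ s in a..x, g1 s) * c|
        ≤ ψ x := by
    intro x hx
    set e1 := Real.exp (c * F x) with he1
    set e2 := Real.exp (c * ∫ s in a..x, g1 s) with he2
    have he1b : e1 ≤ Real.exp M :=
      Real.exp_le_exp.2 (le_trans (le_abs_self _) (hcFbd x hx))
    have he1nn : 0 < e1 := Real.exp_pos _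
    have hee : |e1 - e2| ≤ Real.exp M * (|c| * ε) := by
      have h1 := exp_lip (hcFbd x hx) (hcF1bd x hx)
      have h2 : |c * F x - c * ∫ s in a..x, g1 s| ≤ |c| * ε := by
        rw [← mul_sub, abs_mul]
        exact mul_le_mul_of_nonneg_left (hclose x hx) (abs_nonneg c)
      calc |e1 - e2| ≤ Real.exp M * |c * F x - c * ∫ s in a..x, g1 s| := h1
        _ ≤ Real.exp M * (|c| * ε) :=
            mul_le_mul_of_nonneg_left h2 (Real.exp_pos M).le
    have hsplit : g x * e1 * c - g1 x * e2 * c = ((g x - g1 x) * e1 + g1 x * (e1 - e2)) * c := by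
      ring
    rw [hsplit, abs_mul, hψ]
    have h1 : |(g x - g1 x) * e1 + g1 x * (e1 - e2)|
        ≤ |g x - g1 x| * Real.exp M + |g1 x| * (Real.exp M * (|c| * ε)) := by
      refine le_trans (abs_add_le _ _) (add_le_add ?_ ?_)
      · rw [abs_mul, abs_of_pos he1nn]
        exact mul_le_mul_of_nonneg_left he1b (abs_nonneg _)
      · rw [abs_mul]
        exact mul_le_mul_of_nonneg_left hee (abs_nonneg _)
    calc |(g x - g1 x) * e1 + g1 x * (e1 - e2)| * |c|
        ≤ (|g x - g1 x| * Real.exp M + |g1 x| * (Real.exp M * (|c| * ε))) * |c| :=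
          mul_le_mul_of_nonneg_right h1 (abs_nonneg c)
      _ ≤ Real.exp M * |c| * |g x - g1 x| + Real.exp M * (|c| ^ 2 * ε) * |g1 x| := by
          nlinarith [abs_nonneg (g x - g1 x), abs_nonneg (g1 x), abs_nonneg c,
            (Real.exp_pos M).le, hε.le]
  -- assembling
  have hstep2 : |(∫ x in a..b, g x * Real.exp (c * F x) * c)
      - ∫ x in a..b, g1 x * Real.exp (c * ∫ s in a..x, g1 s) * c|
      ≤ ∫ x in a..b, ψ x := by
    rw [← intervalIntegral.integral_sub hPint hP1int]
    refine le_trans (intervalIntegral.abs_integral_le_integral_abs hab) ?_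
    exact intervalIntegral.integral_mono_on hab (hPint.sub hP1int).abs hψint hpt
  have hg1L1 : ∫ x in a..b, |g1 x| ≤ F b + 1 := by
    have hmono : ∫ x in a..b, |g1 x| ≤ ∫ x in a..b, (g x + |g x - g1 x|) := by
      refine intervalIntegral.integral_mono_on hab (g1ii a b).abs
        ((gii a b).add ((gii a b).sub (g1ii a b)).abs) ?_
      intro x _
      have : |g1 x| ≤ |g x| + |g x - g1 x| := by
        have h2a := abs_sub_abs_le_abs_sub (g1 x) (g x)
        have h2b := abs_sub_comm (g1 x) (g x)
        linarith [h2a, h2b.le, h2b.ge]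
      rwa [abs_of_nonneg (hgnn x)] at this
    have hadd : ∫ x in a..b, (g x + |g x - g1 x|)
        = (∫ x in a..b, g x) + ∫ x in a..b, |g x - g1 x| :=
      intervalIntegral.integral_add (gii a b) ((gii a b).sub (g1ii a b)).abs
    have := hL1 b ⟨hab, le_rfl⟩
    rw [hadd, ← hF b] at hmono
    linarith
  have hψval : ∫ x in a..b, ψ x ≤ Real.exp M * |c| * ε + Real.exp M * (|c| ^ 2 * ε) * (F b + 1) := by
    rw [hψ]
    rw [intervalIntegral.integral_add
      ((((gii a b).sub (g1ii a b)).abs).const_mul _) (((g1ii a b).abs).const_mul _),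
      intervalIntegral.integral_const_mul, intervalIntegral.integral_const_mul]
    have h1 := hL1 b ⟨hab, le_rfl⟩
    have h2 : (0:ℝ) ≤ Real.exp M * |c| := by positivity
    have h3 : (0:ℝ) ≤ Real.exp M * (|c| ^ 2 * ε) := by positivity
    have h4 : (0:ℝ) ≤ ∫ x in a..b, |g1 x| := by
      apply intervalIntegral.integral_nonneg hab
      intro u _; exact abs_nonneg _
    nlinarith [hg1L1]
  have hT1 : |Real.exp (c * ∫ s in a..b, g1 s) - Real.exp (c * F b)|
      ≤ Real.exp M * (|c| * ε) := by
    have h1 := exp_lip (hcF1bd b ⟨hab, le_rfl⟩) (hcFbd b ⟨hab, le_rfl⟩)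
    refine le_trans h1 ?_
    refine mul_le_mul_of_nonneg_left ?_ (Real.exp_pos M).le
    rw [← mul_sub, abs_mul]
    refine mul_le_mul_of_nonneg_left ?_ (abs_nonneg c)
    rw [abs_sub_comm]
    exact hclose b ⟨hab, le_rfl⟩
  -- final combination
  have hKey : (∫ x in a..b, g x * Real.exp (c * F x) * c) - (Real.exp (c * F b) - 1)
      = ((∫ x in a..b, g x * Real.exp (c * F x) * c)
          - ∫ x in a..b, g1 x * Real.exp (c * ∫ s in a..x, g1 s) * c)
        + ((Real.exp (c * ∫ s in a..b, g1 s) - 1) - (Real.exp (c * F b) - 1)) := by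
    rw [hid1]; ring
  rw [hKey, hK]
  calc |_ + _| ≤ _ := abs_add_le _ _
    _ ≤ (Real.exp M * |c| * ε + Real.exp M * (|c| ^ 2 * ε) * (F b + 1))
        + Real.exp M * (|c| * ε) := by
        refine add_le_add (le_trans hstep2 hψval) ?_
        have : (Real.exp (c * ∫ s in a..b, g1 s) - 1) - (Real.exp (c * F b) - 1)
            = Real.exp (c * ∫ s in a..b, g1 s) - Real.exp (c * F b) := by ring
        rw [this]
        exact hT1
    _ ≤ Real.exp M * (|c| + |c| ^ 2 * (F b + 1) + |c|) * ε := by ring_nf; nlinarith [(Real.exp_pos M).le, hε.le, abs_nonneg c, hFbnn]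

lemma fub {F W : ℝ → ℝ} {a b : ℝ} (hab : a ≤ b)
    (hF : IntegrableOn F (Ioc a b)) (hW : IntegrableOn W (Ioc a b)) :
    ∫ t in a..b, F t * ∫ s in t..b, W s = ∫ s in a..b, W s * ∫ t in a..s, F t := by
  set μ := volume.restrict (Ioc a b) with hμ
  have hbase : Integrable (fun p : ℝ × ℝ => F p.1 * W p.2) (μ.prod μ) := Integrable.mul_prod hF hW
  have hsetm : MeasurableSet {p : ℝ × ℝ | p.1 < p.2} :=
    measurableSet_lt measurable_fst measurable_snd
  set u : ℝ × ℝ → ℝ := ({p : ℝ × ℝ | p.1 < p.2}).indicator (fun p => F p.1 * W p.2) with hu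
  have huint : Integrable u (μ.prod μ) := hbase.indicator hsetm
  have hswap : ∫ t, (∫ s, u (t, s) ∂μ) ∂μ = ∫ s, (∫ t, u (t, s) ∂μ) ∂μ :=
    integral_integral_swap huint
  have hL : ∀ t ∈ Ioc a b, (∫ s, u (t, s) ∂μ) = F t * ∫ s in t..b, W s := by
    intro t ht
    have h1 : (fun s => u (t, s)) = (Ioi t).indicator (fun s => F t * W s) := by
      funext s
      by_cases h : t < s
      · simp [hu, Set.indicator_of_mem, h, Set.mem_Ioi, Set.mem_setOf_eq]
      · simp [hu, Set.indicator_of_notMem, h, Set.mem_Ioi, Set.mem_setOf_eq]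
    rw [h1, integral_indicator measurableSet_Ioi, hμ,
      Measure.restrict_restrict measurableSet_Ioi]
    have hset : Ioi t ∩ Ioc a b = Ioc t b := by
      ext s
      constructor
      · rintro ⟨h1', h2', h3'⟩; exact ⟨h1', h3'⟩
      · rintro ⟨h1', h3'⟩; exact ⟨h1', ht.1.trans h1', h3'⟩
    rw [hset, intervalIntegral.integral_of_le ht.2, MeasureTheory.integral_const_mul]
  have hR : ∀ s ∈ Ioc a b, (∫ t, u (t, s) ∂μ) = W s * ∫ t in a..s, F t := by
    intro s hs
    have h1 : (fun t => u (t, s)) = (Iio s).indicator (fun t => F t * W s) := by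
      funext t
      by_cases h : t < s
      · simp [hu, Set.indicator_of_mem, h, Set.mem_Iio, Set.mem_setOf_eq]
      · simp [hu, Set.indicator_of_notMem, h, Set.mem_Iio, Set.mem_setOf_eq]
    rw [h1, integral_indicator measurableSet_Iio, hμ,
      Measure.restrict_restrict measurableSet_Iio]
    have hset : Iio s ∩ Ioc a b = Ioo a s := by
      ext t
      constructor
      · rintro ⟨h1', h2', h3'⟩; exact ⟨h2', h1'⟩
      · rintro ⟨h2', h1'⟩; exact ⟨h1', h2', (h1'.le.trans hs.2)⟩
    rw [hset, intervalIntegral.integral_of_le hs.1.le,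
      MeasureTheory.integral_Ioc_eq_integral_Ioo, MeasureTheory.integral_mul_const, mul_comm]
  calc ∫ t in a..b, F t * ∫ s in t..b, W s
      = ∫ t in Ioc a b, (F t * ∫ s in t..b, W s) := intervalIntegral.integral_of_le hab
    _ = ∫ t, (∫ s, u (t, s) ∂μ) ∂μ := by
        rw [hμ]
        exact (setIntegral_congr_fun measurableSet_Ioc hL).symm
    _ = ∫ s, (∫ t, u (t, s) ∂μ) ∂μ := hswap
    _ = ∫ s in Ioc a b, (W s * ∫ t in a..s, F t) := by
        rw [hμ]
        exact setIntegral_congr_fun measurableSet_Ioc hR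
    _ = ∫ s in a..b, W s * ∫ t in a..s, F t := (intervalIntegral.integral_of_le hab).symm

/-- `QQ r q x = ∫_0^x q/r`. -/
def QQ (r q : ℝ → ℝ) (x : ℝ) : ℝ := ∫ t in (0:ℝ)..x, q t / r t

section Setup

variable {r q : ℝ → ℝ}

lemma gloc (hr : Continuous r) (hrpos : ∀ x, 0 < r x)
    (hq : LocallyIntegrable q volume) : LocallyIntegrable (fun t => q t / r t) volume := by
  rw [locallyIntegrable_iff]
  intro K hK
  have h1 : IntegrableOn q K := hq.integrableOn_isCompact hK
  have h2 : IntegrableOn (fun t => q t * (r t)⁻¹) K volume :=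
    h1.mul_continuousOn ((hr.continuousOn).inv₀ fun x _ => (hrpos x).ne') hK
  simpa [div_eq_mul_inv] using h2

lemma gnn (hrpos : ∀ x, 0 < r x) (hqnn : ∀ x, 0 ≤ q x) : ∀ t, 0 ≤ q t / r t := fun t => div_nonneg (hqnn t) (hrpos t).le

lemma gii' (hr : Continuous r) (hrpos : ∀ x, 0 < r x)
    (hq : LocallyIntegrable q volume) : ∀ u v : ℝ, IntervalIntegrable (fun t => q t / r t) volume u v :=
  gii_of_loc (gloc hr hrpos hq)

lemma QQdiff (hr : Continuous r) (hrpos : ∀ x, 0 < r x)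
    (hq : LocallyIntegrable q volume) : ∀ u x : ℝ, QQ r q x - QQ r q u = ∫ s in u..x, q s / r s := by
  intro u x
  have h := intervalIntegral.integral_add_adjacent_intervals
    (gii' hr hrpos hq u 0) (gii' hr hrpos hq 0 x)
  have h2 : ∫ s in u..(0:ℝ), q s / r s = -∫ s in (0:ℝ)..u, q s / r s :=
    intervalIntegral.integral_symm 0 u
  rw [QQ, QQ]
  linarith

lemma QQcont (hr : Continuous r) (hrpos : ∀ x, 0 < r x)
    (hq : LocallyIntegrable q volume) : Continuous (QQ r q) :=
  intervalIntegral.continuous_primitive (gii' hr hrpos hq) 0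

lemma QQmono (hr : Continuous r) (hrpos : ∀ x, 0 < r x)
    (hq : LocallyIntegrable q volume) (hqnn : ∀ x, 0 ≤ q x) : ∀ {u v : ℝ}, u ≤ v → QQ r q u ≤ QQ r q v := by
  intro u v huv
  have h1 := QQdiff hr hrpos hq u v
  have h2 : 0 ≤ ∫ s in u..v, q s / r s :=
    intervalIntegral.integral_nonneg huv fun t _ => gnn hrpos hqnn t
  linarith

lemma kmain (hr : Continuous r) (hrpos : ∀ x, 0 < r x)
    (hq : LocallyIntegrable q volume) (hqnn : ∀ x, 0 ≤ q x) (c : ℝ) {u v : ℝ} (huv : u ≤ v) :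
    ∫ t in u..v, (q t / r t) * Real.exp (c * QQ r q t) * c
      = Real.exp (c * QQ r q v) - Real.exp (c * QQ r q u) := by
  have hF : ∀ x : ℝ, QQ r q x - QQ r q u = ∫ s in u..x, q s / r s := QQdiff hr hrpos hq u
  have hk := key' (gloc hr hrpos hq) (gnn hrpos hqnn) c huv
    (F := fun x => QQ r q x - QQ r q u) hF
  have h2 := congrArg (fun z => Real.exp (c * QQ r q u) * z) hk
  rw [← intervalIntegral.integral_const_mul] at h2
  have h3 : ∀ t : ℝ, Real.exp (c * QQ r q u) * ((q t / r t) * Real.exp (c * (QQ r q t - QQ r q u)) * c)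
      = (q t / r t) * Real.exp (c * QQ r q t) * c := by
    intro t
    rw [show Real.exp (c * QQ r q t) = Real.exp (c * QQ r q u) * Real.exp (c * (QQ r q t - QQ r q u)) by
      rw [← Real.exp_add]; ring_nf]
    ring
  rw [intervalIntegral.integral_congr (g := fun t => (q t / r t) * Real.exp (c * QQ r q t) * c)
    (fun t _ => h3 t)] at h2
  rw [h2, mul_sub, mul_one, ← Real.exp_add]
  ring_nf

lemma k1 (hr : Continuous r) (hrpos : ∀ x, 0 < r x)
    (hq : LocallyIntegrable q volume) (hqnn : ∀ x, 0 ≤ q x) {u v : ℝ} (huv : u ≤ v) :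
    ∫ t in u..v, (q t / r t) * Real.exp (-QQ r q t)
      = Real.exp (-QQ r q u) - Real.exp (-QQ r q v) := by
  have h := kmain hr hrpos hq hqnn (-1) huv
  have h2 : ∀ t : ℝ, (q t / r t) * Real.exp (-1 * QQ r q t) * (-1)
      = -((q t / r t) * Real.exp (-QQ r q t)) := by
    intro t; rw [neg_one_mul]; ring
  rw [intervalIntegral.integral_congr
    (g := fun t => -((q t / r t) * Real.exp (-QQ r q t))) (fun t _ => h2 t),
    intervalIntegral.integral_neg] at h
  simp only [neg_one_mul] at h
  linarith

lemma k2 (hr : Continuous r) (hrpos : ∀ x, 0 < r x)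
    (hq : LocallyIntegrable q volume) (hqnn : ∀ x, 0 ≤ q x) {u v : ℝ} (huv : u ≤ v) :
    ∫ t in u..v, (q t / r t) * Real.exp (QQ r q t)
      = Real.exp (QQ r q v) - Real.exp (QQ r q u) := by
  have h := kmain hr hrpos hq hqnn 1 huv
  have h2 : ∀ t : ℝ, (q t / r t) * Real.exp (1 * QQ r q t) * 1
      = (q t / r t) * Real.exp (QQ r q t) := by
    intro t; rw [one_mul, mul_one]
  rw [intervalIntegral.integral_congr
    (g := fun t => (q t / r t) * Real.exp (QQ r q t)) (fun t _ => h2 t)] at h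
  simpa [one_mul] using h

end Setup

lemma rep {r q : ℝ → ℝ} (hr : Continuous r) (hrpos : ∀ x, 0 < r x)
    (hq : LocallyIntegrable q volume) (hqnn : ∀ x, 0 ≤ q x)
    {f y : ℝ → ℝ} (hf : Continuous f) (hy : Continuous y)
    (hsol : ∀ a b : ℝ, y b - y a = ∫ t in a..b, (q t * y t - f t) / r t)
    {a b : ℝ} (hab : a ≤ b) :
    y a * Real.exp (-QQ r q a) - y b * Real.exp (-QQ r q b)
      = ∫ t in a..b, Real.exp (-QQ r q t) * f t / r t := by
  have hrne : ∀ x : ℝ, r x ≠ 0 := fun x => (hrpos x).ne'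
  have hE : Continuous fun t => Real.exp (-QQ r q t) := ((QQcont hr hrpos hq).neg).rexp
  set w : ℝ → ℝ := fun t => q t / r t * y t - f t / r t with hwdef
  have hw : ∀ t, (q t * y t - f t) / r t = w t := by
    intro t; rw [hwdef]; rw [sub_div, mul_div_right_comm]
  have hsol' : ∀ u v : ℝ, y v - y u = ∫ t in u..v, w t := by
    intro u v
    rw [hsol u v]
    exact intervalIntegral.integral_congr fun t _ => hw t
  have hwii : ∀ u v : ℝ, IntervalIntegrable w volume u v := by
    intro u v
    exact ((gii' hr hrpos hq u v).mul_continuousOn hy.continuousOn).sub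
      ((hf.div hr hrne).intervalIntegrable u v)
  have hgEii : ∀ u v : ℝ, IntervalIntegrable
      (fun t => q t / r t * Real.exp (-QQ r q t)) volume u v := fun u v =>
    (gii' hr hrpos hq u v).mul_continuousOn hE.continuousOn
  have hWpc : Continuous fun x => ∫ s in a..x, w s :=
    intervalIntegral.continuous_primitive hwii a
  have hy2 : ∀ x, y x = y a + ∫ s in a..x, w s := by
    intro x
    have := hsol' a x
    linarith
  -- main computation
  have c1 : ∫ t in a..b, (q t / r t * Real.exp (-QQ r q t)) * y t
      = ∫ t in a..b, (y a * (q t / r t * Real.exp (-QQ r q t))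
          + (q t / r t * Real.exp (-QQ r q t)) * ∫ s in a..t, w s) := by
    apply intervalIntegral.integral_congr
    intro t _
    beta_reduce
    rw [hy2 t]
    ring
  have c2 : ∫ t in a..b, (y a * (q t / r t * Real.exp (-QQ r q t))
        + (q t / r t * Real.exp (-QQ r q t)) * ∫ s in a..t, w s)
      = y a * (∫ t in a..b, q t / r t * Real.exp (-QQ r q t))
        + ∫ t in a..b, (q t / r t * Real.exp (-QQ r q t)) * ∫ s in a..t, w s := by
    rw [intervalIntegral.integral_add ((hgEii a b).const_mul (y a))
      ((hgEii a b).mul_continuousOn hWpc.continuousOn),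
      intervalIntegral.integral_const_mul]
  have c3 : ∫ t in a..b, q t / r t * Real.exp (-QQ r q t)
      = Real.exp (-QQ r q a) - Real.exp (-QQ r q b) := k1 hr hrpos hq hqnn hab
  have c4 : ∫ t in a..b, (q t / r t * Real.exp (-QQ r q t)) * ∫ s in a..t, w s
      = ∫ t in a..b, w t * ∫ s in t..b, q s / r s * Real.exp (-QQ r q s) :=
    (fub hab ((intervalIntegrable_iff_integrableOn_Ioc_of_le hab).mp (hwii a b))
      ((intervalIntegrable_iff_integrableOn_Ioc_of_le hab).mp (hgEii a b))).symm
  have c5 : ∫ t in a..b, w t * ∫ s in t..b, q s / r s * Real.exp (-QQ r q s)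
      = ∫ t in a..b, (w t * Real.exp (-QQ r q t) - w t * Real.exp (-QQ r q b)) := by
    apply intervalIntegral.integral_congr
    intro t ht
    rw [uIcc_of_le hab] at ht
    beta_reduce
    rw [k1 hr hrpos hq hqnn ht.2]
    ring
  have c6 : ∫ t in a..b, (w t * Real.exp (-QQ r q t) - w t * Real.exp (-QQ r q b))
      = (∫ t in a..b, w t * Real.exp (-QQ r q t))
        - (y b - y a) * Real.exp (-QQ r q b) := by
    rw [intervalIntegral.integral_sub ((hwii a b).mul_continuousOn hE.continuousOn)
      ((hwii a b).mul_const _), intervalIntegral.integral_mul_const, ← hsol' a b]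
  have c7 : ∫ t in a..b, w t * Real.exp (-QQ r q t)
      = (∫ t in a..b, (q t / r t * Real.exp (-QQ r q t)) * y t)
        - ∫ t in a..b, Real.exp (-QQ r q t) * f t / r t := by
    have hEfr : Continuous fun t => Real.exp (-QQ r q t) * f t / r t :=
      (hE.mul hf).div hr hrne
    rw [← intervalIntegral.integral_sub
      ((hgEii a b).mul_continuousOn hy.continuousOn)
      (hEfr.intervalIntegrable a b)]
    apply intervalIntegral.integral_congr
    intro t _
    beta_reduce
    rw [hwdef]
    ring
  have hEbpos : 0 < Real.exp (-QQ r q b) := Real.exp_pos _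
  have hfinal := c1.trans (c2.trans (by rw [c3, c4, c5, c6, c7]))
  set T := ∫ t in a..b, (q t / r t * Real.exp (-QQ r q t)) * y t
  set I := ∫ t in a..b, Real.exp (-QQ r q t) * f t / r t
  -- hfinal : T = y a * (E a - E b) + (T - I - (y b - y a) * E b)
  linarith [hfinal]

section Main

variable {r q : ℝ → ℝ}

lemma AE_eq (hr : Continuous r) (hrpos : ∀ x, 0 < r x) (hq : LocallyIntegrable q volume)
    (x : ℝ) :
    AE r q x = ENNReal.ofReal (Real.exp (QQ r q x))
      * ∫⁻ t in Set.Ioi x, ENNReal.ofReal (Real.exp (-QQ r q t) / r t) := by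
  have h1 : ∀ t : ℝ, (1 / r t) * Real.exp (-(∫ s in x..t, q s / r s))
      = Real.exp (QQ r q x) * (Real.exp (-QQ r q t) / r t) := by
    intro t
    rw [← QQdiff hr hrpos hq x t]
    rw [show -(QQ r q t - QQ r q x) = QQ r q x + -QQ r q t by ring, Real.exp_add]
    field_simp
  rw [AE]
  calc ∫⁻ t in Set.Ioi x, ENNReal.ofReal ((1 / r t) * Real.exp (-(∫ s in x..t, q s / r s)))
      = ∫⁻ t in Set.Ioi x, ENNReal.ofReal (Real.exp (QQ r q x))
          * ENNReal.ofReal (Real.exp (-QQ r q t) / r t) := by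
        apply lintegral_congr
        intro t
        rw [h1 t, ENNReal.ofReal_mul (Real.exp_pos _).le]
    _ = ENNReal.ofReal (Real.exp (QQ r q x))
          * ∫⁻ t in Set.Ioi x, ENNReal.ofReal (Real.exp (-QQ r q t) / r t) :=
        lintegral_const_mul' _ _ ENNReal.ofReal_ne_top

lemma G_eq (hr : Continuous r) (hrpos : ∀ x, 0 < r x) (hq : LocallyIntegrable q volume)
    (f : ℝ → ℝ) (x : ℝ) :
    G r q f x = Real.exp (QQ r q x)
      * ∫ t in Set.Ioi x, (Real.exp (-QQ r q t) / r t) * f t := by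
  have h1 : ∀ t : ℝ, (1 / r t) * Real.exp (-(∫ s in x..t, q s / r s)) * f t
      = Real.exp (QQ r q x) * ((Real.exp (-QQ r q t) / r t) * f t) := by
    intro t
    rw [← QQdiff hr hrpos hq x t]
    rw [show -(QQ r q t - QQ r q x) = QQ r q x + -QQ r q t by ring, Real.exp_add]
    field_simp
  rw [G]
  calc ∫ t in Set.Ioi x, (1 / r t) * Real.exp (-(∫ s in x..t, q s / r s)) * f t
      = ∫ t in Set.Ioi x, Real.exp (QQ r q x) * ((Real.exp (-QQ r q t) / r t) * f t) := by
        congr 1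
        funext t
        exact h1 t
    _ = _ := MeasureTheory.integral_const_mul _ _

lemma dir1 (hr : Continuous r) (hrpos : ∀ x, 0 < r x)
    (hq : LocallyIntegrable q volume) (hqnn : ∀ x, 0 ≤ q x)
    {y : ℝ → ℝ} {c : ℝ} (hc : 0 ≤ c)
    (hy : IsSolution r q (fun _ => (1:ℝ)) y) (hybd : ∀ x, |y x| ≤ c) (a : ℝ) :
    AE r q a = ENNReal.ofReal (y a) ∧ 0 ≤ y a
      ∧ IntegrableOn (fun t => Real.exp (-QQ r q t) / r t) (Set.Ioi a) volume
      ∧ (∫ t in Set.Ioi a, Real.exp (-QQ r q t) / r t) = y a * Real.exp (-QQ r q a) := by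
  obtain ⟨hyc, hysol, hybot, hytop⟩ := hy
  have hrne : ∀ x : ℝ, r x ≠ 0 := fun x => (hrpos x).ne'
  have hhc : Continuous fun t => Real.exp (-QQ r q t) / r t :=
    (((QQcont hr hrpos hq).neg).rexp).div hr hrne
  have hhnn : ∀ t, 0 ≤ Real.exp (-QQ r q t) / r t :=
    fun t => div_nonneg (Real.exp_pos _).le (hrpos t).le
  have hrep : ∀ b : ℝ, a ≤ b →
      y a * Real.exp (-QQ r q a) - y b * Real.exp (-QQ r q b)
        = ∫ t in a..b, Real.exp (-QQ r q t) / r t := by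
    intro b hab
    have h := rep hr hrpos hq hqnn (f := fun _ => (1:ℝ)) continuous_const hyc hysol hab
    rw [h]
    apply intervalIntegral.integral_congr
    intro t _
    simp
  have hEmono : ∀ {u v : ℝ}, u ≤ v → Real.exp (-QQ r q v) ≤ Real.exp (-QQ r q u) :=
    fun {u v} huv => Real.exp_le_exp.2 (neg_le_neg (QQmono hr hrpos hq hqnn huv))
  have hEapos : 0 < Real.exp (-QQ r q a) := Real.exp_pos _
  -- y b * E b → 0 at +∞
  have htend0 : Tendsto (fun b => y b * Real.exp (-QQ r q b)) atTop (nhds 0) := by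
    rw [tendsto_zero_iff_norm_tendsto_zero]
    apply squeeze_zero' (Eventually.of_forall fun b => norm_nonneg _)
      (g := fun b => |y b| * Real.exp (-QQ r q a))
    · filter_upwards [eventually_ge_atTop a] with b hb
      rw [Real.norm_eq_abs, abs_mul, abs_of_pos (Real.exp_pos _)]
      exact mul_le_mul_of_nonneg_left (hEmono hb) (abs_nonneg _)
    · have := (hytop.abs).mul_const (Real.exp (-QQ r q a))
      simpa using this
  -- the interval integrals tend to y a * E a
  have htendI : Tendsto (fun b => ∫ t in a..b, Real.exp (-QQ r q t) / r t) atTop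
      (nhds (y a * Real.exp (-QQ r q a))) := by
    have h1 : Tendsto (fun b => y a * Real.exp (-QQ r q a) - y b * Real.exp (-QQ r q b))
        atTop (nhds (y a * Real.exp (-QQ r q a))) := by
      have := (tendsto_const_nhds (x := y a * Real.exp (-QQ r q a))
        (f := atTop (α := ℝ))).sub htend0
      simpa using this
    apply h1.congr'
    filter_upwards [eventually_ge_atTop a] with b hb
    exact hrep b hb
  -- integrability on Ioi a
  have hint : IntegrableOn (fun t => Real.exp (-QQ r q t) / r t) (Set.Ioi a) volume := by
    apply integrableOn_Ioi_of_intervalIntegral_norm_bounded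
      (y a * Real.exp (-QQ r q a) + c * Real.exp (-QQ r q a)) a
      (fun i : ℝ => hhc.integrableOn_Ioc) tendsto_id
    filter_upwards [eventually_ge_atTop a] with i hi
    simp only [id_eq]
    have h1 : ∫ t in a..i, ‖Real.exp (-QQ r q t) / r t‖
        = ∫ t in a..i, Real.exp (-QQ r q t) / r t := by
      apply intervalIntegral.integral_congr
      intro t _
      beta_reduce
      rw [Real.norm_eq_abs, abs_of_nonneg (hhnn t)]
    rw [h1, ← hrep i hi]
    have h2 : -(y i * Real.exp (-QQ r q i)) ≤ c * Real.exp (-QQ r q a) := by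
      have h3 : |y i * Real.exp (-QQ r q i)| ≤ c * Real.exp (-QQ r q a) := by
        rw [abs_mul, abs_of_pos (Real.exp_pos _)]
        exact mul_le_mul (hybd i) (hEmono hi) (Real.exp_pos _).le hc
      linarith [neg_abs_le (y i * Real.exp (-QQ r q i))]
    linarith
  have hIoi := MeasureTheory.intervalIntegral_tendsto_integral_Ioi a hint tendsto_id
  have hval : (∫ t in Set.Ioi a, Real.exp (-QQ r q t) / r t)
      = y a * Real.exp (-QQ r q a) := tendsto_nhds_unique hIoi htendI
  have hynn : 0 ≤ y a := by
    have h1 : 0 ≤ y a * Real.exp (-QQ r q a) := by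
      rw [← hval]
      exact setIntegral_nonneg measurableSet_Ioi fun t _ => hhnn t
    exact (mul_nonneg_iff_of_pos_right hEapos).mp h1
  refine ⟨?_, hynn, hint, hval⟩
  rw [AE_eq hr hrpos hq a,
    ← MeasureTheory.ofReal_integral_eq_lintegral_ofReal hint
      (ae_of_all _ fun t => hhnn t),
    hval, ← ENNReal.ofReal_mul (Real.exp_pos _).le]
  congr 1
  rw [Real.exp_neg]
  field_simp

lemma intcont {h2 : ℝ → ℝ} (hc : Continuous h2)
    (hint : ∀ x : ℝ, IntegrableOn h2 (Set.Ioi x) volume) :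
    Continuous (fun x => ∫ t in Set.Ioi x, h2 t) ∧
      ∀ u v : ℝ, u ≤ v →
        (∫ t in Set.Ioi u, h2 t) = (∫ t in u..v, h2 t) + ∫ t in Set.Ioi v, h2 t := by
  have hdiff : ∀ u v : ℝ, u ≤ v →
      (∫ t in Set.Ioi u, h2 t) = (∫ t in u..v, h2 t) + ∫ t in Set.Ioi v, h2 t := by
    intro u v huv
    rw [← Ioc_union_Ioi_eq_Ioi huv,
      setIntegral_union (Ioc_disjoint_Ioi le_rfl) measurableSet_Ioi
        hc.integrableOn_Ioc (hint v),
      intervalIntegral.integral_of_le huv]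
  refine ⟨?_, hdiff⟩
  have heq : ∀ x : ℝ, ∫ t in Set.Ioi x, h2 t
      = (∫ t in Set.Ioi 0, h2 t) - ∫ t in (0:ℝ)..x, h2 t := by
    intro x
    rcases le_total x 0 with hx | hx
    · have h1 := hdiff x 0 hx
      have h2' : ∫ t in (0:ℝ)..x, h2 t = -∫ t in x..(0:ℝ), h2 t :=
        intervalIntegral.integral_symm x 0
      linarith
    · have h1 := hdiff 0 x hx
      linarith
  rw [funext heq]
  exact continuous_const.sub
    (intervalIntegral.continuous_primitive (fun u v => hc.intervalIntegrable u v) 0)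

lemma Gbound (hr : Continuous r) (hrpos : ∀ x, 0 < r x) (hq : LocallyIntegrable q volume)
    {f : ℝ → ℝ} (hf : Continuous f) {Mf : ℝ} (hMf : ∀ t, |f t| ≤ Mf) {x : ℝ}
    (hhint : IntegrableOn (fun t => Real.exp (-QQ r q t) / r t) (Set.Ioi x) volume) :
    |G r q f x| ≤ Mf
      * (Real.exp (QQ r q x) * ∫ t in Set.Ioi x, Real.exp (-QQ r q t) / r t) := by
  have hhnn : ∀ t, 0 ≤ Real.exp (-QQ r q t) / r t :=
    fun t => div_nonneg (Real.exp_pos _).le (hrpos t).le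
  have hMf0 : 0 ≤ Mf := le_trans (abs_nonneg _) (hMf x)
  have hfint : IntegrableOn (fun t => Real.exp (-QQ r q t) / r t * f t) (Set.Ioi x) volume := by
    have h1 : IntegrableOn (fun t => f t * (Real.exp (-QQ r q t) / r t)) (Set.Ioi x) volume :=
      hhint.bdd_mul (hf.aestronglyMeasurable.restrict)
        (ae_of_all _ fun t => (Real.norm_eq_abs (f t)) ▸ hMf t)
    exact h1.congr_fun (fun t _ => mul_comm _ _) measurableSet_Ioi
  rw [G_eq hr hrpos hq, abs_mul, abs_of_pos (Real.exp_pos _)]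
  have h2 : |∫ t in Set.Ioi x, Real.exp (-QQ r q t) / r t * f t|
      ≤ ∫ t in Set.Ioi x, Mf * (Real.exp (-QQ r q t) / r t) := by
    rw [← Real.norm_eq_abs]
    refine le_trans (norm_integral_le_integral_norm _) ?_
    apply integral_mono hfint.norm ((hhint).const_mul Mf)
    intro t
    beta_reduce
    rw [Real.norm_eq_abs, abs_mul, abs_of_nonneg (hhnn t)]
    rw [mul_comm (Mf)]
    exact mul_le_mul_of_nonneg_left (hMf t) (hhnn t)
  rw [integral_const_mul] at h2
  have h3 : 0 ≤ ∫ t in Set.Ioi x, Real.exp (-QQ r q t) / r t :=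
    setIntegral_nonneg measurableSet_Ioi fun t _ => hhnn t
  calc Real.exp (QQ r q x) * |∫ t in Set.Ioi x, Real.exp (-QQ r q t) / r t * f t|
      ≤ Real.exp (QQ r q x) * (Mf * ∫ t in Set.Ioi x, Real.exp (-QQ r q t) / r t) :=
        mul_le_mul_of_nonneg_left h2 (Real.exp_pos _).le
    _ = Mf * (Real.exp (QQ r q x) * ∫ t in Set.Ioi x, Real.exp (-QQ r q t) / r t) := by ring

lemma hhint_of_tendsto (hr : Continuous r) (hrpos : ∀ x, 0 < r x)
    (hq : LocallyIntegrable q volume) (hqnn : ∀ x, 0 ≤ q x)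
    (hT : Tendsto (AE r q) atTop (nhds 0)) :
    ∀ x : ℝ, IntegrableOn (fun t => Real.exp (-QQ r q t) / r t) (Set.Ioi x) volume := by
  have hrne : ∀ x : ℝ, r x ≠ 0 := fun x => (hrpos x).ne'
  have hhc : Continuous fun t => Real.exp (-QQ r q t) / r t :=
    (((QQcont hr hrpos hq).neg).rexp).div hr hrne
  have hhnn : ∀ t, 0 ≤ Real.exp (-QQ r q t) / r t :=
    fun t => div_nonneg (Real.exp_pos _).le (hrpos t).le
  obtain ⟨x0, hx0⟩ := (hT.eventually (gt_mem_nhds (by norm_num : (0:ℝ≥0∞) < 1))).exists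
  have hHE0 : (∫⁻ t in Set.Ioi x0, ENNReal.ofReal (Real.exp (-QQ r q t) / r t)) ≠ ⊤ := by
    intro htop
    rw [AE_eq hr hrpos hq x0, htop, ENNReal.mul_top] at hx0
    · exact (lt_irrefl _ (hx0.trans_le le_top)).elim
    · exact (ENNReal.ofReal_pos.mpr (Real.exp_pos _)).ne'
  intro x
  have hHE : (∫⁻ t in Set.Ioi x, ENNReal.ofReal (Real.exp (-QQ r q t) / r t)) ≠ ⊤ := by
    rcases le_total x0 x with hx | hx
    · exact fun htop => hHE0 (eq_top_iff.2 (htop ▸ lintegral_mono_set (Set.Ioi_subset_Ioi hx)))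
    · rw [← Ioc_union_Ioi_eq_Ioi hx, lintegral_union measurableSet_Ioi (Ioc_disjoint_Ioi le_rfl)]
      have h1 : (∫⁻ t in Set.Ioc x x0, ENNReal.ofReal (Real.exp (-QQ r q t) / r t)) < ⊤ :=
        (hhc.integrableOn_Ioc).lintegral_lt_top
      exact ENNReal.add_ne_top.2 ⟨h1.ne, hHE0⟩
  exact (lintegral_ofReal_ne_top_iff_integrable (hhc.aestronglyMeasurable.restrict)
    (ae_of_all _ fun t => hhnn t)).mp hHE

lemma dir2 (hr : Continuous r) (hrpos : ∀ x, 0 < r x)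
    (hq : LocallyIntegrable q volume) (hqnn : ∀ x, 0 ≤ q x)
    (hT : Tendsto (AE r q) atTop (nhds 0)) (hB : Tendsto (AE r q) atBot (nhds 0)) :
    CorrectlySolvableC r q := by
  have hrne : ∀ x : ℝ, r x ≠ 0 := fun x => (hrpos x).ne'
  have hQc : Continuous (QQ r q) := QQcont hr hrpos hq
  have hhc : Continuous fun t => Real.exp (-QQ r q t) / r t := ((hQc.neg).rexp).div hr hrne
  have hhnn : ∀ t, 0 ≤ Real.exp (-QQ r q t) / r t :=
    fun t => div_nonneg (Real.exp_pos _).le (hrpos t).le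
  have hhint := hhint_of_tendsto hr hrpos hq hqnn hT
  -- the real-valued function A
  set Ar : ℝ → ℝ := fun x =>
    Real.exp (QQ r q x) * ∫ t in Set.Ioi x, Real.exp (-QQ r q t) / r t with hArdef
  have hAr_eq : ∀ x, AE r q x = ENNReal.ofReal (Ar x) := by
    intro x
    rw [AE_eq hr hrpos hq x,
      ← MeasureTheory.ofReal_integral_eq_lintegral_ofReal (hhint x)
        (ae_of_all _ fun t => hhnn t),
      ← ENNReal.ofReal_mul (Real.exp_pos _).le]
  have hArnn : ∀ x, 0 ≤ Ar x := fun x =>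
    mul_nonneg (Real.exp_pos _).le
      (setIntegral_nonneg measurableSet_Ioi fun t _ => hhnn t)
  have hArT : Tendsto Ar atTop (nhds 0) := by
    have h1 := (ENNReal.tendsto_toReal (by norm_num : (0:ℝ≥0∞) ≠ ⊤)).comp hT
    simp only [ENNReal.toReal_zero] at h1
    apply h1.congr
    intro x
    simp only [Function.comp_apply, hAr_eq x, ENNReal.toReal_ofReal (hArnn x)]
  have hArB : Tendsto Ar atBot (nhds 0) := by
    have h1 := (ENNReal.tendsto_toReal (by norm_num : (0:ℝ≥0∞) ≠ ⊤)).comp hB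
    simp only [ENNReal.toReal_zero] at h1
    apply h1.congr
    intro x
    simp only [Function.comp_apply, hAr_eq x, ENNReal.toReal_ofReal (hArnn x)]
  have hArc : Continuous Ar := (hQc.rexp).mul (intcont hhc hhint).1
  -- global bound on Ar
  obtain ⟨N1, hN1⟩ := (eventually_atTop.1 (hArT.eventually
    (gt_mem_nhds (by norm_num : (0:ℝ) < 1))))
  obtain ⟨N2, hN2⟩ := (eventually_atBot.1 (hArB.eventually
    (gt_mem_nhds (by norm_num : (0:ℝ) < 1))))
  obtain ⟨K, hK⟩ := (isCompact_Icc (a := N2) (b := N1)).exists_bound_of_continuousOn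
    hArc.continuousOn
  set cb : ℝ := max K 1 with hcb
  have hcb1 : (1:ℝ) ≤ cb := le_max_right _ _
  have hcbAr : ∀ x, Ar x ≤ cb := by
    intro x
    rcases le_total x N2 with hx | hx
    · exact le_trans (hN2 x hx).le hcb1
    rcases le_total N1 x with hx' | hx'
    · exact le_trans (hN1 x hx').le hcb1
    · have := hK x ⟨hx, hx'⟩
      rw [Real.norm_eq_abs] at this
      exact le_trans (le_abs_self _) (le_trans this (le_max_left _ _))
  refine ⟨cb + 1, by linarith, ?_⟩
  intro f hf hfb
  obtain ⟨M, hM⟩ := hfb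
  -- the sup norm
  have hbdd : BddAbove (Set.range fun t => |f t|) := ⟨M, by rintro v ⟨t, rfl⟩; exact hM t⟩
  set Mf : ℝ := ⨆ t, |f t| with hMfdef
  have hMf : ∀ t, |f t| ≤ Mf := fun t => le_ciSup hbdd t
  have hMf0 : 0 ≤ Mf := le_trans (abs_nonneg _) (hMf 0)
  -- integrability of h·f on Ioi x
  have hfint : ∀ x : ℝ, IntegrableOn
      (fun t => Real.exp (-QQ r q t) / r t * f t) (Set.Ioi x) volume := by
    intro x
    have h1 : IntegrableOn (fun t => f t * (Real.exp (-QQ r q t) / r t)) (Set.Ioi x) volume :=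
      (hhint x).bdd_mul (hf.aestronglyMeasurable.restrict)
        (ae_of_all _ fun t => (Real.norm_eq_abs (f t)) ▸ hMf t)
    exact h1.congr_fun (fun t _ => mul_comm _ _) measurableSet_Ioi
  have hhfc : Continuous fun t => Real.exp (-QQ r q t) / r t * f t := hhc.mul hf
  obtain ⟨hφc, hφdiff⟩ := intcont hhfc hfint
  -- the candidate solution
  set y : ℝ → ℝ := fun x =>
    Real.exp (QQ r q x) * ∫ t in Set.Ioi x, Real.exp (-QQ r q t) / r t * f t with hydef
  have hyG : ∀ x, G r q f x = y x := fun x => G_eq hr hrpos hq f x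
  have hybd : ∀ x, |y x| ≤ Mf * Ar x := by
    intro x
    rw [← hyG x]
    exact Gbound hr hrpos hq hf hMf (hhint x)
  have hycont : Continuous y := (hQc.rexp).mul hφc
  have hytop : Tendsto y atTop (nhds 0) := by
    rw [tendsto_zero_iff_norm_tendsto_zero]
    apply squeeze_zero' (Eventually.of_forall fun b => norm_nonneg _)
      (Eventually.of_forall fun b => (Real.norm_eq_abs (y b)) ▸ hybd b)
    have := hArT.const_mul Mf
    simpa using this
  have hybot : Tendsto y atBot (nhds 0) := by
    rw [tendsto_zero_iff_norm_tendsto_zero]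
    apply squeeze_zero' (Eventually.of_forall fun b => norm_nonneg _)
      (Eventually.of_forall fun b => (Real.norm_eq_abs (y b)) ▸ hybd b)
    have := hArB.const_mul Mf
    simpa using this
  -- interval integrability helpers
  have hfrii : ∀ u v : ℝ, IntervalIntegrable (fun t => f t / r t) volume u v :=
    fun u v => ((hf.div hr hrne)).intervalIntegrable u v
  have hgEQii : ∀ u v : ℝ, IntervalIntegrable
      (fun t => q t / r t * Real.exp (QQ r q t)) volume u v :=
    fun u v => (gii' hr hrpos hq u v).mul_continuousOn (hQc.rexp).continuousOn
  have hhfii : ∀ u v : ℝ, IntervalIntegrable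
      (fun t => Real.exp (-QQ r q t) / r t * f t) volume u v :=
    fun u v => hhfc.intervalIntegrable u v
  -- the integral identity, for a ≤ b
  have hcore : ∀ a b : ℝ, a ≤ b → y b - y a = ∫ t in a..b, (q t * y t - f t) / r t := by
    intro a b hab
    have hw : ∀ t, (q t * y t - f t) / r t = q t / r t * y t - f t / r t := by
      intro t; rw [sub_div, mul_div_right_comm]
    have htb : Continuous fun t => ∫ s in t..b, Real.exp (-QQ r q s) / r s * f s := by
      have heq2 : (fun t : ℝ => ∫ s in t..b, Real.exp (-QQ r q s) / r s * f s)
          = fun t => (∫ s in a..b, Real.exp (-QQ r q s) / r s * f s)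
              - ∫ s in a..t, Real.exp (-QQ r q s) / r s * f s := by
        funext t
        have h1 := intervalIntegral.integral_add_adjacent_intervals (hhfii a t) (hhfii t b)
        linarith
      rw [heq2]
      exact continuous_const.sub
        (intervalIntegral.continuous_primitive hhfii a)
    -- step 1 : expand y inside the integral
    have s1 : ∫ t in a..b, q t / r t * y t
        = ∫ t in a..b, ((∫ s in Set.Ioi b, Real.exp (-QQ r q s) / r s * f s)
              * (q t / r t * Real.exp (QQ r q t))
            + (q t / r t * Real.exp (QQ r q t))
              * ∫ s in t..b, Real.exp (-QQ r q s) / r s * f s) := by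
      apply intervalIntegral.integral_congr
      intro t ht
      rw [uIcc_of_le hab] at ht
      beta_reduce
      rw [hydef]
      have h1 := hφdiff t b ht.2
      simp only []
      rw [h1]
      ring
    have s2 : ∫ t in a..b, ((∫ s in Set.Ioi b, Real.exp (-QQ r q s) / r s * f s)
            * (q t / r t * Real.exp (QQ r q t))
          + (q t / r t * Real.exp (QQ r q t))
            * ∫ s in t..b, Real.exp (-QQ r q s) / r s * f s)
        = (∫ s in Set.Ioi b, Real.exp (-QQ r q s) / r s * f s)
            * (∫ t in a..b, q t / r t * Real.exp (QQ r q t))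
          + ∫ t in a..b, (q t / r t * Real.exp (QQ r q t))
              * ∫ s in t..b, Real.exp (-QQ r q s) / r s * f s := by
      rw [intervalIntegral.integral_add ((hgEQii a b).const_mul _)
        ((hgEQii a b).mul_continuousOn htb.continuousOn),
        intervalIntegral.integral_const_mul]
    have s3 : ∫ t in a..b, q t / r t * Real.exp (QQ r q t)
        = Real.exp (QQ r q b) - Real.exp (QQ r q a) := k2 hr hrpos hq hqnn hab
    have s4 : ∫ t in a..b, (q t / r t * Real.exp (QQ r q t))
          * ∫ s in t..b, Real.exp (-QQ r q s) / r s * f s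
        = ∫ s in a..b, (Real.exp (-QQ r q s) / r s * f s)
            * ∫ t in a..s, q t / r t * Real.exp (QQ r q t) :=
      fub hab ((intervalIntegrable_iff_integrableOn_Ioc_of_le hab).mp (hgEQii a b))
        ((intervalIntegrable_iff_integrableOn_Ioc_of_le hab).mp (hhfii a b))
    have s5 : ∫ s in a..b, (Real.exp (-QQ r q s) / r s * f s)
          * ∫ t in a..s, q t / r t * Real.exp (QQ r q t)
        = ∫ s in a..b, ((f s / r s)
            - (Real.exp (-QQ r q s) / r s * f s) * Real.exp (QQ r q a)) := by
      apply intervalIntegral.integral_congr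
      intro s hs
      rw [uIcc_of_le hab] at hs
      beta_reduce
      rw [k2 hr hrpos hq hqnn hs.1]
      have hexp : Real.exp (-QQ r q s) * Real.exp (QQ r q s) = 1 := by
        rw [← Real.exp_add]; simp
      field_simp [hrne s]
      linear_combination f s * hexp
    have s6 : ∫ s in a..b, ((f s / r s)
          - (Real.exp (-QQ r q s) / r s * f s) * Real.exp (QQ r q a))
        = (∫ s in a..b, f s / r s)
          - (∫ s in a..b, Real.exp (-QQ r q s) / r s * f s) * Real.exp (QQ r q a) := by
      rw [intervalIntegral.integral_sub (hfrii a b) ((hhfii a b).mul_const _),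
        intervalIntegral.integral_mul_const]
    have s8 := hφdiff a b hab
    -- combine: ∫ g·y = y b - y a + ∫ f/r
    have s9 : ∫ t in a..b, q t / r t * y t
        = y b - y a + ∫ s in a..b, f s / r s := by
      rw [s1, s2, s3, s4, s5, s6, hydef]
      simp only []
      have hya : Real.exp (QQ r q a) * (∫ t in Set.Ioi a, Real.exp (-QQ r q t) / r t * f t)
          = Real.exp (QQ r q a) * ((∫ t in a..b, Real.exp (-QQ r q t) / r t * f t)
            + ∫ t in Set.Ioi b, Real.exp (-QQ r q t) / r t * f t) := by rw [← s8]
      nlinarith [hya]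
    rw [intervalIntegral.integral_congr (g := fun t => q t / r t * y t - f t / r t)
      (fun t _ => hw t),
      intervalIntegral.integral_sub
        ((gii' hr hrpos hq a b).mul_continuousOn hycont.continuousOn) (hfrii a b), s9]
    ring
  have hsol_id : ∀ a b : ℝ, y b - y a = ∫ t in a..b, (q t * y t - f t) / r t := by
    intro a b
    rcases le_total a b with hab | hab
    · exact hcore a b hab
    · have h1 := hcore b a hab
      rw [intervalIntegral.integral_symm]
      linarith
  have hsol : IsSolution r q f y := ⟨hycont, hsol_id, hybot, hytop⟩
  -- uniqueness
  have huniq : ∀ z : ℝ → ℝ, IsSolution r q f z → z = y := by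
    intro z hz
    obtain ⟨hzc, hzsol, hzbot, hztop⟩ := hz
    funext a
    have hEmono : ∀ {u v : ℝ}, u ≤ v → Real.exp (-QQ r q v) ≤ Real.exp (-QQ r q u) :=
      fun {u v} huv => Real.exp_le_exp.2 (neg_le_neg (QQmono hr hrpos hq hqnn huv))
    have hrepz : ∀ b : ℝ, a ≤ b →
        z a * Real.exp (-QQ r q a) - z b * Real.exp (-QQ r q b)
          = ∫ t in a..b, Real.exp (-QQ r q t) * f t / r t :=
      fun b hab => rep hr hrpos hq hqnn hf hzc hzsol hab
    have hrepy : ∀ b : ℝ, a ≤ b →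
        y a * Real.exp (-QQ r q a) - y b * Real.exp (-QQ r q b)
          = ∫ t in a..b, Real.exp (-QQ r q t) * f t / r t :=
      fun b hab => rep hr hrpos hq hqnn hf hycont hsol_id hab
    have hdd : ∀ b : ℝ, a ≤ b →
        (z a - y a) * Real.exp (-QQ r q a) = (z b - y b) * Real.exp (-QQ r q b) := by
      intro b hab
      have h1 := hrepz b hab
      have h2 := hrepy b hab
      nlinarith [h1, h2]
    have htends : Tendsto (fun b => (z b - y b) * Real.exp (-QQ r q b)) atTop (nhds 0) := by
      rw [tendsto_zero_iff_norm_tendsto_zero]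
      apply squeeze_zero' (Eventually.of_forall fun b => norm_nonneg _)
        (g := fun b => |z b - y b| * Real.exp (-QQ r q a))
      · filter_upwards [eventually_ge_atTop a] with b hb
        rw [Real.norm_eq_abs, abs_mul, abs_of_pos (Real.exp_pos _)]
        exact mul_le_mul_of_nonneg_left (hEmono hb) (abs_nonneg _)
      · have h3 : Tendsto (fun b => z b - y b) atTop (nhds 0) := by
          have := hztop.sub hytop
          simpa using this
        have := (h3.abs).mul_const (Real.exp (-QQ r q a))
        simpa using this
    have hconst : Tendsto (fun _ : ℝ => (z a - y a) * Real.exp (-QQ r q a)) atTop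
        (nhds ((z a - y a) * Real.exp (-QQ r q a))) := tendsto_const_nhds
    have h4 : (z a - y a) * Real.exp (-QQ r q a) = 0 := by
      apply tendsto_nhds_unique (hconst.congr' ?_) htends
      filter_upwards [eventually_ge_atTop a] with b hb
      exact hdd b hb
    have h5 : z a - y a = 0 := by
      rcases mul_eq_zero.mp h4 with h | h
      · exact h
      · exact ((Real.exp_pos _).ne' h).elim
    linarith
  constructor
  · exact ⟨y, hsol, fun z hz => huniq z hz⟩
  · intro z hz x
    rw [huniq z hz]
    calc |y x| ≤ Mf * Ar x := hybd x
      _ ≤ Mf * cb := mul_le_mul_of_nonneg_left (hcbAr x) hMf0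
      _ ≤ (cb + 1) * Mf := by nlinarith

theorem stmt12 (r q : ℝ → ℝ) (hr : Continuous r) (hrpos : ∀ x, 0 < r x)
    (hq : LocallyIntegrable q volume) (hqnn : ∀ x, 0 ≤ q x) :
    (CorrectlySolvableC r q ↔
      (Tendsto (AE r q) atTop (nhds 0) ∧ Tendsto (AE r q) atBot (nhds 0))) ∧
    (CorrectlySolvableC r q → S1E r q = ⊤) ∧
    (CorrectlySolvableC r q → GOpNormC r q = ⨆ x : ℝ, AE r q x) := by
  have hrne : ∀ x : ℝ, r x ≠ 0 := fun x => (hrpos x).ne'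
  -- from correct solvability, extract the solution for f = 1 and its properties
  have hsol1 : CorrectlySolvableC r q → ∃ y : ℝ → ℝ, IsSolution r q (fun _ => (1:ℝ)) y ∧
      ∃ c : ℝ, 0 ≤ c ∧ ∀ x, |y x| ≤ c := by
    rintro ⟨c, hc, hall⟩
    obtain ⟨⟨y, hy, -⟩, hbd⟩ := hall (fun _ => 1) continuous_const ⟨1, fun x => by simp⟩
    refine ⟨y, hy, c, hc.le, fun x => ?_⟩
    have h1 := hbd y hy x
    simpa [ciSup_const] using h1
  have hforward : CorrectlySolvableC r q →
      Tendsto (AE r q) atTop (nhds 0) ∧ Tendsto (AE r q) atBot (nhds 0) := by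
    intro hCS
    obtain ⟨y, hy, c, hc, hybd⟩ := hsol1 hCS
    have hd1 := fun a => dir1 hr hrpos hq hqnn hc hy hybd a
    have hAEy : AE r q = fun a => ENNReal.ofReal (y a) := funext fun a => (hd1 a).1
    constructor
    · rw [hAEy]
      have h2 := (ENNReal.continuous_ofReal.tendsto 0).comp hy.2.2.2
      simpa [Function.comp_def] using h2
    · rw [hAEy]
      have h2 := (ENNReal.continuous_ofReal.tendsto 0).comp hy.2.2.1
      simpa [Function.comp_def] using h2
  refine ⟨⟨hforward, fun h => dir2 hr hrpos hq hqnn h.1 h.2⟩, ?_, ?_⟩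
  · -- S₁ = ∞
    intro hCS
    have hB := (hforward hCS).2
    by_contra hS
    obtain ⟨R, hR⟩ := (isCompact_Icc (a := (0:ℝ)) (b := 1)).exists_bound_of_continuousOn
      hr.continuousOn
    have hR0 : 0 < R := by
      have := hR 0 ⟨le_rfl, zero_le_one⟩
      rw [Real.norm_eq_abs] at this
      exact lt_of_lt_of_le (hrpos 0) (le_trans (le_abs_self _) this)
    set S : ℝ := (S1E r q).toReal with hSdef
    set δ : ℝ := Real.exp (-S) * (Real.exp (-QQ r q 1) / R) with hδdef
    have hδ0 : 0 < δ := by positivity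
    have hlow : ∀ x : ℝ, x ≤ 0 → ENNReal.ofReal δ ≤ AE r q x := by
      intro x hx
      have hQx : -S ≤ QQ r q x := by
        have h1 : QQ r q 0 - QQ r q x = ∫ s in x..(0:ℝ), q s / r s := QQdiff hr hrpos hq x 0
        have hQ0 : QQ r q 0 = 0 := intervalIntegral.integral_same
        have h2 : ∫ s in x..(0:ℝ), q s / r s ≤ S := by
          rw [intervalIntegral.integral_of_le hx, MeasureTheory.integral_Ioc_eq_integral_Ioo]
          have h3 : IntegrableOn (fun s => q s / r s) (Set.Ioo x 0) volume := by
            have h4 := (intervalIntegrable_iff_integrableOn_Ioc_of_le hx).mp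
              (gii' hr hrpos hq x 0)
            exact h4.mono_set Set.Ioo_subset_Ioc_self
          have h5 : ENNReal.ofReal (∫ s in Set.Ioo x 0, q s / r s)
              = ∫⁻ s in Set.Ioo x 0, ENNReal.ofReal (q s / r s) :=
            MeasureTheory.ofReal_integral_eq_lintegral_ofReal h3
              (ae_of_all _ fun s => gnn hrpos hqnn s)
          have h6 : (∫⁻ s in Set.Ioo x 0, ENNReal.ofReal (q s / r s)) ≤ S1E r q :=
            lintegral_mono_set fun s hs => hs.2
          rw [← ENNReal.ofReal_le_iff_le_toReal hS]
          rw [h5]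
          exact h6
        linarith
      have hEx : Real.exp (-S) ≤ Real.exp (QQ r q x) := Real.exp_le_exp.2 hQx
      have hptw : ∀ t ∈ Set.Ioc (0:ℝ) 1,
          ENNReal.ofReal (Real.exp (-QQ r q 1) / R)
            ≤ ENNReal.ofReal (Real.exp (-QQ r q t) / r t) := by
        intro t ht
        apply ENNReal.ofReal_le_ofReal
        apply div_le_div₀ (Real.exp_pos _).le
          (Real.exp_le_exp.2 (neg_le_neg (QQmono hr hrpos hq hqnn ht.2))) (hrpos t)
        have := hR t ⟨ht.1.le, ht.2⟩
        rw [Real.norm_eq_abs] at this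
        exact le_trans (le_abs_self _) this
      have hconst : ENNReal.ofReal (Real.exp (-QQ r q 1) / R)
          ≤ ∫⁻ t in Set.Ioc (0:ℝ) 1, ENNReal.ofReal (Real.exp (-QQ r q t) / r t) := by
        have h7 : ∫⁻ _ in Set.Ioc (0:ℝ) 1, ENNReal.ofReal (Real.exp (-QQ r q 1) / R) ∂volume
            = ENNReal.ofReal (Real.exp (-QQ r q 1) / R) := by
          rw [MeasureTheory.setLIntegral_const, Real.volume_Ioc]
          norm_num
        rw [← h7]
        apply MeasureTheory.setLIntegral_mono
          ((((((QQcont hr hrpos hq).neg).rexp).div hr hrne)).measurable.ennreal_ofReal) hptw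
      have hHlow : (∫⁻ t in Set.Ioc (0:ℝ) 1, ENNReal.ofReal (Real.exp (-QQ r q t) / r t))
          ≤ ∫⁻ t in Set.Ioi x, ENNReal.ofReal (Real.exp (-QQ r q t) / r t) :=
        lintegral_mono_set fun t ht => lt_of_le_of_lt hx ht.1
      rw [AE_eq hr hrpos hq x, hδdef, ENNReal.ofReal_mul (Real.exp_pos _).le]
      exact mul_le_mul' (ENNReal.ofReal_le_ofReal hEx) (le_trans hconst hHlow)
    obtain ⟨x, hx1, hx2⟩ := ((hB.eventually
      (gt_mem_nhds (ENNReal.ofReal_pos.2 hδ0))).and (eventually_le_atBot 0)).exists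
    exact absurd (hlow x hx2) (not_le.2 hx1)
  · -- operator norm
    intro hCS
    obtain ⟨y, hy, c, hc, hybd⟩ := hsol1 hCS
    have hd1 := fun a => dir1 hr hrpos hq hqnn hc hy hybd a
    have hval : ∀ x, Real.exp (QQ r q x) * (∫ t in Set.Ioi x, Real.exp (-QQ r q t) / r t)
        = y x := by
      intro x
      rw [(hd1 x).2.2.2, Real.exp_neg]
      field_simp
    apply le_antisymm
    · apply sInf_le
      intro f hf hfb x
      obtain ⟨M, hM⟩ := hfb
      have hbdd : BddAbove (Set.range fun t => |f t|) := ⟨M, by rintro v ⟨t, rfl⟩; exact hM t⟩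
      have hMf : ∀ t, |f t| ≤ ⨆ t, |f t| := fun t => le_ciSup hbdd t
      have hMf0 : (0:ℝ) ≤ ⨆ t, |f t| := le_trans (abs_nonneg _) (hMf 0)
      have hG := Gbound hr hrpos hq hf hMf ((hd1 x).2.2.1)
      rw [hval x] at hG
      calc ENNReal.ofReal |G r q f x| ≤ ENNReal.ofReal ((⨆ t, |f t|) * y x) :=
            ENNReal.ofReal_le_ofReal hG
        _ = ENNReal.ofReal (y x) * ENNReal.ofReal (⨆ t, |f t|) := by
            rw [ENNReal.ofReal_mul hMf0, mul_comm]
        _ ≤ (⨆ x', AE r q x') * ENNReal.ofReal (⨆ t, |f t|) := by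
            apply mul_le_mul_left
            rw [← (hd1 x).1]
            exact le_iSup _ x
    · apply le_sInf
      intro C hC
      apply iSup_le
      intro x
      have h1 := hC (fun _ => 1) continuous_const ⟨1, fun t => by simp⟩ x
      have hG1 : G r q (fun _ => 1) x = y x := by
        rw [G_eq hr hrpos hq]
        rw [← hval x]
        congr 1
        apply setIntegral_congr_fun measurableSet_Ioi
        intro t _
        simp
      rw [hG1, abs_of_nonneg (hd1 x).2.1] at h1
      have h2 : (⨆ t : ℝ, |(1:ℝ)|) = (1:ℝ) := by
        simp [ciSup_const]
      rw [(hd1 x).1]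
      calc ENNReal.ofReal (y x) ≤ C * ENNReal.ofReal (⨆ t : ℝ, |(1:ℝ)|) := h1
        _ = C := by rw [h2, ENNReal.ofReal_one, mul_one]

end Main
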